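/- For real x with 0 < x < 1, real c > 0 and T > 0, the absolute value of (1/(2πi)) ∫_{c-iT}^{c+iT} x^s/s ds is at most a constant times x^c/(T·|log x|). -/

import Mathlib

open Complex Set MeasureTheory Filter

lemma perron_diffAt {x : ℝ} (hx : 0 < x) {s : ℂ} (hs : s ≠ 0) :
    DifferentiableAt ℂ (fun s : ℂ => (x : ℂ) ^ s / s) s := by
  apply DifferentiableAt.div
  · exact differentiableAt_id.const_cpow (Or.inl (by exact_mod_cast hx.ne'))
  · exact differentiableAt_id
  · exact hs

lemma perron_norm_cpow {x : ℝ} (hx : 0 < x) (u y : ℝ) :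
    ‖(x : ℂ) ^ ((u : ℂ) + (y : ℂ) * I)‖ = x ^ u := by
  rw [Complex.norm_cpow_eq_rpow_re_of_pos hx]
  simp

lemma perron_cont_rpow {x : ℝ} (hx : 0 < x) : Continuous fun u : ℝ => x ^ u := by
  have h : Continuous fun u : ℝ => Real.exp (Real.log x * u) :=
    Real.continuous_exp.comp (continuous_const.mul continuous_id)
  simpa [Real.rpow_def_of_pos hx] using h

lemma perron_integral_rpow {x : ℝ} (hx : 0 < x) (hx1 : x < 1) {c σ : ℝ} :
    ∫ u in c..σ, x ^ u = (x ^ c - x ^ σ) / |Real.log x| := by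
  have hlog : Real.log x < 0 := Real.log_neg hx hx1
  have hlog' : Real.log x ≠ 0 := hlog.ne
  have h : ∀ u ∈ Set.uIcc c σ,
      HasDerivAt (fun u => Real.exp (Real.log x * u) / Real.log x) (x ^ u) u := by
    intro u _
    have h1 : HasDerivAt (fun u : ℝ => Real.log x * u) (Real.log x) u := by
      simpa using (hasDerivAt_id u).const_mul (Real.log x)
    have h2 := h1.exp.div_const (Real.log x)
    have h3 : Real.exp (Real.log x * u) * Real.log x / Real.log x = x ^ u := by
      rw [mul_div_assoc, div_self hlog', mul_one, Real.rpow_def_of_pos hx]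
    rwa [h3] at h2
  rw [intervalIntegral.integral_eq_sub_of_hasDerivAt h
    ((perron_cont_rpow hx).intervalIntegrable c σ)]
  rw [abs_of_neg hlog]
  rw [Real.rpow_def_of_pos hx σ, Real.rpow_def_of_pos hx c]
  rw [div_neg]
  ring

/-- Bound on the horizontal integrals. -/
lemma perron_horiz {x c σ T y : ℝ} (hx : 0 < x) (hx1 : x < 1) (hT : 0 < T)
    (hσ : c ≤ σ) (hy : T ≤ |y|) :
    ‖∫ u in c..σ, (x : ℂ) ^ ((u : ℂ) + (y : ℂ) * I) / ((u : ℂ) + (y : ℂ) * I)‖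
      ≤ x ^ c / (T * |Real.log x|) := by
  have hlog : 0 < |Real.log x| := abs_pos.mpr (Real.log_neg hx hx1).ne
  have hbd : ∀ᵐ (u : ℝ) ∂(volume.restrict <| Set.uIoc c σ),
      ‖(x : ℂ) ^ ((u : ℂ) + (y : ℂ) * I) / ((u : ℂ) + (y : ℂ) * I)‖ ≤ x ^ u / T := by
    refine Eventually.of_forall fun (u : ℝ) => ?_
    rw [norm_div, perron_norm_cpow hx]
    apply div_le_div_of_nonneg_left (Real.rpow_nonneg hx.le u) hT
    calc T ≤ |y| := hy
      _ = |((u : ℂ) + (y : ℂ) * I).im| := by simp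
      _ ≤ ‖(u : ℂ) + (y : ℂ) * I‖ := Complex.abs_im_le_norm _
  have hInt : IntervalIntegrable (fun u => x ^ u / T) volume c σ :=
    ((perron_cont_rpow hx).div_const T).intervalIntegrable c σ
  refine (intervalIntegral.norm_integral_le_abs_of_norm_le hbd hInt).trans ?_
  rw [intervalIntegral.integral_div, perron_integral_rpow hx hx1, abs_div, abs_div,
    _root_.abs_abs, abs_of_pos hT]
  have h1 : |x ^ c - x ^ σ| ≤ x ^ c := by
    rw [_root_.abs_of_nonneg (sub_nonneg.mpr (Real.rpow_le_rpow_of_exponent_ge hx hx1.le hσ))]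
    linarith [Real.rpow_nonneg hx.le σ]
  rw [div_div, mul_comm (|Real.log x|) T]
  gcongr

lemma perron_vert {x c σ T : ℝ} (hx : 0 < x) (hc : 0 < c) (hσ : c ≤ σ) (hT : 0 < T) :
    ‖∫ y in (-T)..T, (x : ℂ) ^ ((σ : ℂ) + (y : ℂ) * I) / ((σ : ℂ) + (y : ℂ) * I)‖
      ≤ x ^ σ / c * (2 * T) := by
  have h := intervalIntegral.norm_integral_le_of_norm_le_const (a := -T) (b := T)
    (C := x ^ σ / c)
    (f := fun y : ℝ => (x : ℂ) ^ ((σ : ℂ) + (y : ℂ) * I) / ((σ : ℂ) + (y : ℂ) * I)) ?_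
  · calc _ ≤ x ^ σ / c * |T - (-T)| := h
      _ = x ^ σ / c * (2 * T) := by rw [abs_of_pos (by linarith)]; ring
  · intro y _
    rw [norm_div, perron_norm_cpow hx]
    apply div_le_div_of_nonneg_left (Real.rpow_nonneg hx.le σ) hc
    calc c ≤ σ := hσ
      _ ≤ |((σ : ℂ) + (y : ℂ) * I).re| := by simp [le_abs_self]
      _ ≤ ‖(σ : ℂ) + (y : ℂ) * I‖ := Complex.abs_re_le_norm _

lemma perron_rect {x c σ T : ℝ} (hx : 0 < x) (hc : 0 < c) (hσ : c ≤ σ) (hT : 0 < T) :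
    (∫ u in c..σ, (x : ℂ) ^ ((u : ℂ) + ((-T : ℝ) : ℂ) * I) / ((u : ℂ) + ((-T : ℝ) : ℂ) * I))
      - (∫ u in c..σ, (x : ℂ) ^ ((u : ℂ) + (T : ℂ) * I) / ((u : ℂ) + (T : ℂ) * I))
      + I • (∫ y in (-T)..T, (x : ℂ) ^ ((σ : ℂ) + (y : ℂ) * I) / ((σ : ℂ) + (y : ℂ) * I))
      - I • (∫ y in (-T)..T, (x : ℂ) ^ ((c : ℂ) + (y : ℂ) * I) / ((c : ℂ) + (y : ℂ) * I))
      = 0 := by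
  have H : DifferentiableOn ℂ (fun s : ℂ => (x : ℂ) ^ s / s)
      (Set.uIcc (⟨c, -T⟩ : ℂ).re (⟨σ, T⟩ : ℂ).re ×ℂ Set.uIcc (⟨c, -T⟩ : ℂ).im (⟨σ, T⟩ : ℂ).im) := by
    intro s hs
    rw [Complex.mem_reProdIm] at hs
    have hre : c ≤ s.re := by
      have := hs.1
      rw [Set.uIcc_of_le (by exact hσ)] at this
      exact this.1
    have hs0 : s ≠ 0 := by
      intro h
      rw [h] at hre
      simp at hre
      linarith
    exact (perron_diffAt hx hs0).differentiableWithinAt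
  have := Complex.integral_boundary_rect_eq_zero_of_differentiableOn
    (fun s : ℂ => (x : ℂ) ^ s / s) (⟨c, -T⟩ : ℂ) (⟨σ, T⟩ : ℂ) H
  simpa using this

theorem truncated_perron_lt_one :
    ∃ C : ℝ, 0 < C ∧ ∀ x c T : ℝ, 0 < x → x < 1 → 0 < c → 0 < T →
      ‖((1 / (2 * Real.pi)) *
            ∫ t in (-T)..T, (x : ℂ) ^ ((c : ℂ) + t * Complex.I) / ((c : ℂ) + t * Complex.I))‖
        ≤ C * x ^ c / (T * |Real.log x|) := by
  refine ⟨1, one_pos, fun x c T hx hx1 hc hT => ?_⟩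
  have hlog : 0 < |Real.log x| := abs_pos.mpr (Real.log_neg hx hx1).ne
  set L : ℝ := x ^ c / (T * |Real.log x|) with hL
  have hL0 : 0 ≤ L := by positivity
  set Vc : ℂ := ∫ t in (-T)..T, (x : ℂ) ^ ((c : ℂ) + t * I) / ((c : ℂ) + t * I) with hVc
  have key : ‖Vc‖ ≤ 2 * L := by
    have h0 : Tendsto (fun σ : ℝ => x ^ σ) atTop (nhds 0) :=
      tendsto_rpow_atTop_of_base_lt_one x (by linarith) hx1
    have hten : Tendsto (fun σ : ℝ => 2 * L + x ^ σ / c * (2 * T)) atTop (nhds (2 * L)) := by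
      have h1 := ((h0.div_const c).mul_const (2 * T)).const_add (2 * L)
      simpa using h1
    refine ge_of_tendsto hten ?_
    filter_upwards [eventually_ge_atTop c] with σ hσ
    have hrect := perron_rect (x := x) hx hc hσ hT
    set A := ∫ u in c..σ, (x : ℂ) ^ ((u : ℂ) + ((-T : ℝ) : ℂ) * I) / ((u : ℂ) + ((-T : ℝ) : ℂ) * I) with hA
    set B := ∫ u in c..σ, (x : ℂ) ^ ((u : ℂ) + (T : ℂ) * I) / ((u : ℂ) + (T : ℂ) * I) with hB
    set Vσ := ∫ y in (-T)..T, (x : ℂ) ^ ((σ : ℂ) + (y : ℂ) * I) / ((σ : ℂ) + (y : ℂ) * I) with hVσ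
    have hVc' : I • Vc = A - B + I • Vσ := by
      have : (∫ y in (-T)..T, (x : ℂ) ^ ((c : ℂ) + (y : ℂ) * I) / ((c : ℂ) + (y : ℂ) * I)) = Vc := rfl
      rw [← this]
      exact (sub_eq_zero.mp hrect).symm
    calc ‖Vc‖ = ‖I • Vc‖ := by rw [norm_smul]; simp
      _ = ‖A - B + I • Vσ‖ := by rw [hVc']
      _ ≤ ‖A - B‖ + ‖I • Vσ‖ := norm_add_le _ _
      _ ≤ ‖A‖ + ‖B‖ + ‖Vσ‖ := by
          have := norm_sub_le A B
          have h2 : ‖I • Vσ‖ = ‖Vσ‖ := by rw [norm_smul]; simp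
          linarith
      _ ≤ L + L + x ^ σ / c * (2 * T) := by
          have hA' := perron_horiz (x := x) (c := c) (σ := σ) (y := (-T : ℝ)) hx hx1 hT hσ
            (by rw [abs_neg, abs_of_pos hT])
          have hB' := perron_horiz (x := x) (c := c) (σ := σ) (y := T) hx hx1 hT hσ
            (by rw [abs_of_pos hT])
          have hV' := perron_vert (x := x) hx hc hσ hT
          rw [← hA, ← hB] at *
          linarith
      _ = 2 * L + x ^ σ / c * (2 * T) := by ring
  have habs : ‖(1 / (2 * (Real.pi : ℂ))) * Vc‖ = (1 / (2 * Real.pi)) * ‖Vc‖ := by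
    rw [norm_mul]
    congr 1
    rw [← Complex.ofReal_ofNat, ← Complex.ofReal_mul, ← Complex.ofReal_one, ← Complex.ofReal_div,
      Complex.norm_real, Real.norm_eq_abs, abs_of_pos (by positivity)]
  rw [habs, one_mul, ← hL]
  have hpi : (1 : ℝ) ≤ Real.pi := by linarith [Real.pi_gt_three]
  calc (1 / (2 * Real.pi)) * ‖Vc‖ ≤ (1 / (2 * Real.pi)) * (2 * L) := by
        apply mul_le_mul_of_nonneg_left key (by positivity)
    _ = L / Real.pi := by field_simp
    _ ≤ L := by
        rw [div_le_iff₀ (by positivity)]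
        nlinarith
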